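/- arXiv:1008.4970 — 7 statements merged into one kernel-verified Lean document; each statement's English description precedes it below -/
import Mathlib

section
/- Let x > 1 be real, 1/2 < α ≤ 1, k ≥ 0 an integer, and 1 < n ≤ x. Then (k+1)·( (n·x^k)^(1/2-α)/log(n·x^k) - (x^(k+2)/n)^(1/2-α)/log(x^(k+2)/n) ) ≥ (k+2)·( (n·x^(k+1))^(1/2-α)/log(n·x^(k+1)) - (x^(k+3)/n)^(1/2-α)/log(x^(k+3)/n) ). -/
open Real

-- pointwise derivative lemma: g(t) = exp(-β t)/t
lemma gderiv (β : ℝ) (t : ℝ) (ht : t ≠ 0) :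
    HasDerivAt (fun s : ℝ => Real.exp (-β * s) / s)
      ((Real.exp (-β * t) * (-β) * t - Real.exp (-β * t)) / t ^ 2) t := by
  have h1 : HasDerivAt (fun s : ℝ => -β * s) (-β) t := by
    simpa using (hasDerivAt_id t).const_mul (-β)
  have h2 := h1.exp
  have h3 := h2.div (hasDerivAt_id t) ht
  simpa [Pi.div_def] using h3

lemma key_ineq (β L K a b : ℝ) (hβ : 0 < β) (hL : 0 < L) (hK : 0 ≤ K)
    (ha : 0 < a) (hab : a ≤ b) (hb : b ≤ (K + 2) * L) :
    (K + 1) * (Real.exp (-β * a) / a - Real.exp (-β * b) / b)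
      ≥ (K + 2) * (Real.exp (-β * (a + L)) / (a + L) - Real.exp (-β * (b + L)) / (b + L)) := by
  set φ : ℝ → ℝ := fun t => (K + 1) * (Real.exp (-β * t) / t)
      - (K + 2) * (Real.exp (-β * (t + L)) / (t + L)) with hφdef
  have hder : ∀ t : ℝ, 0 < t → HasDerivAt φ
      ((K + 1) * ((Real.exp (-β * t) * (-β) * t - Real.exp (-β * t)) / t ^ 2)
        - (K + 2) * ((Real.exp (-β * (t + L)) * (-β) * (t + L) - Real.exp (-β * (t + L))) / (t + L) ^ 2)) t := by
    intro t ht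
    have h1 := (gderiv β t ht.ne').const_mul (K + 1)
    have h2' : HasDerivAt (fun s : ℝ => Real.exp (-β * s) / s)
        ((Real.exp (-β * (t + L)) * (-β) * (t + L) - Real.exp (-β * (t + L))) / (t + L) ^ 2) (t + L) :=
      gderiv β (t + L) (by positivity)
    have h2 := (h2'.comp t ((hasDerivAt_id t).add_const L)).const_mul (K + 2)
    simp only [mul_one] at h1 h2
    exact (h1.sub h2)
  have hanti : AntitoneOn φ (Set.Icc a b) := by
    apply AntitoneOn.mono (s := Set.Icc a b) ?_ le_rfl
    apply antitoneOn_of_deriv_nonpos (convex_Icc a b)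
    · intro t ht
      exact ((hder t (lt_of_lt_of_le ha ht.1)).differentiableAt.continuousAt).continuousWithinAt
    · intro t ht
      rw [interior_Icc] at ht
      exact ((hder t (lt_trans ha ht.1)).differentiableAt.differentiableWithinAt)
    · intro t ht
      rw [interior_Icc] at ht
      have ht0 : 0 < t := lt_trans ha ht.1
      rw [(hder t ht0).deriv]
      -- show the derivative is ≤ 0
      have htb : t ≤ (K + 2) * L := le_trans ht.2.le hb
      have hE1 : 0 < Real.exp (-β * t) := Real.exp_pos _
      have hE2 : 0 < Real.exp (-β * (t + L)) := Real.exp_pos _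
      have hE : Real.exp (-β * (t + L)) * (1 + β * L) ≤ Real.exp (-β * t) := by
        have h1 : 1 + β * L ≤ Real.exp (β * L) := by
          have := Real.add_one_le_exp (β * L); linarith
        calc Real.exp (-β * (t + L)) * (1 + β * L)
            ≤ Real.exp (-β * (t + L)) * Real.exp (β * L) :=
              mul_le_mul_of_nonneg_left h1 hE2.le
          _ = Real.exp (-β * t) := by rw [← Real.exp_add]; ring_nf
      have hq : (K + 2) * t ^ 2 ≤ (K + 1) * (t + L) ^ 2 := by
        nlinarith [mul_nonneg (mul_nonneg hK ht0.le) hL.le, mul_nonneg ht0.le (sub_nonneg.2 htb), sq_nonneg (t - L)]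
      have hpos2 : (0:ℝ) < (t + L) ^ 2 := by positivity
      have hpos1 : (0:ℝ) < t ^ 2 := by positivity
      rw [sub_nonpos, ← mul_div_assoc, ← mul_div_assoc, div_le_div_iff₀ hpos1 hpos2]
      -- target: (K+2) * (... (t+L) stuff) * t^2 ≤ (K+1) * (... t stuff) * (t+L)^2  (with negative signs)
      nlinarith [mul_le_mul_of_nonneg_right hE (mul_nonneg (mul_nonneg (by linarith : (0:ℝ) ≤ K + 1) (by nlinarith : (0:ℝ) ≤ β * t + 1)) hpos2.le),
        mul_le_mul_of_nonneg_left hq (mul_nonneg hE2.le (by nlinarith : (0:ℝ) ≤ β * t + β * L + 1)),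
        mul_nonneg (mul_nonneg (mul_nonneg (by linarith : (0:ℝ) ≤ K+1) (mul_nonneg (mul_nonneg hβ.le hL.le) (mul_nonneg hβ.le ht0.le))) hE2.le) hpos2.le]
  have h := hanti (Set.left_mem_Icc.2 hab) (Set.right_mem_Icc.2 hab) hab
  simp only [hφdef] at h
  linarith

theorem lemma_initial_ineq (x α : ℝ) (hx : 1 < x) (hα1 : 1/2 < α) (hα2 : α ≤ 1)
    (k : ℕ) (n : ℝ) (hn1 : 1 < n) (hn2 : n ≤ x) :
    (k + 1 : ℝ) * ((n * x ^ k) ^ (1/2 - α) / Real.log (n * x ^ k)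
        - (x ^ (k + 2) / n) ^ (1/2 - α) / Real.log (x ^ (k + 2) / n))
      ≥ (k + 2 : ℝ) * ((n * x ^ (k + 1)) ^ (1/2 - α) / Real.log (n * x ^ (k + 1))
        - (x ^ (k + 3) / n) ^ (1/2 - α) / Real.log (x ^ (k + 3) / n)) := by
  have hx0 : (0:ℝ) < x := lt_trans one_pos hx
  have hn0 : (0:ℝ) < n := lt_trans one_pos hn1
  set L := Real.log x with hLdef
  set m := Real.log n with hmdef
  have hL : 0 < L := Real.log_pos hx
  have hm : 0 < m := Real.log_pos hn1
  have hmL : m ≤ L := Real.log_le_log hn0 hn2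
  set β := α - 1/2 with hβdef
  have hβ : 0 < β := by simp [hβdef]; linarith
  -- rewrite logs
  have hlog1 : ∀ j : ℕ, Real.log (n * x ^ j) = m + j * L := by
    intro j
    rw [Real.log_mul hn0.ne' (by positivity), Real.log_pow]
  have hlog2 : ∀ j : ℕ, Real.log (x ^ j / n) = j * L - m := by
    intro j
    rw [Real.log_div (by positivity) hn0.ne', Real.log_pow]
  -- rewrite rpows
  have hrpow1 : ∀ j : ℕ, (n * x ^ j) ^ (1/2 - α) = Real.exp (-β * (m + j * L)) := by
    intro j
    rw [Real.rpow_def_of_pos (by positivity), hlog1 j]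
    congr 1; simp [hβdef]; ring
  have hrpow2 : ∀ j : ℕ, (x ^ j / n) ^ (1/2 - α) = Real.exp (-β * (j * L - m)) := by
    intro j
    rw [Real.rpow_def_of_pos (by positivity), hlog2 j]
    congr 1; simp [hβdef]; ring
  rw [hrpow1 k, hrpow1 (k+1), hrpow2 (k+2), hrpow2 (k+3), hlog1 k, hlog1 (k+1), hlog2 (k+2), hlog2 (k+3)]
  have key := key_ineq β L (k:ℝ) (m + k * L) ((k + 2) * L - m) hβ hL (Nat.cast_nonneg k)
    (by positivity) (by push_cast; nlinarith) (by push_cast; linarith)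
  have e1 : (m + (k:ℝ) * L) + L = m + ((k:ℝ) + 1) * L := by ring
  have e2 : (((k:ℝ) + 2) * L - m) + L = ((k:ℝ) + 3) * L - m := by ring
  rw [e1, e2] at key
  push_cast
  convert key using 4 <;> push_cast <;> ring
end

section
/- Let x ≥ 2 be real, 1/2 < α ≤ 1, k ≥ 1 an integer, and 2 ≤ n ≤ x real. Then 1/log x - 1/(x^(α-1/2)·log x) ≥ (k+1)/((k+2)·log x - log n) - (k+2)/(x^(α-1/2)·((k+3)·log x - log n)). -/
open Real

theorem lemma_bound_sum_over_k_second (x α : ℝ) (hx : 2 ≤ x) (hα1 : 1/2 < α) (hα2 : α ≤ 1)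
    (k : ℕ) (hk : 1 ≤ k) (n : ℝ) (hn1 : 2 ≤ n) (hn2 : n ≤ x) :
    1 / Real.log x - 1 / (x ^ (α - 1/2) * Real.log x)
      ≥ (k + 1 : ℝ) / ((k + 2) * Real.log x - Real.log n)
        - (k + 2 : ℝ) / (x ^ (α - 1/2) * ((k + 3) * Real.log x - Real.log n)) := by
  set L := Real.log x with hLdef
  set M := Real.log n with hMdef
  set X := x ^ (α - 1/2) with hXdef
  set K : ℝ := (k : ℝ) with hKdef
  have hK0 : (0 : ℝ) ≤ K := Nat.cast_nonneg k
  have hL0 : 0 < L := Real.log_pos (by linarith)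
  have hM0 : 0 < M := Real.log_pos (by linarith)
  have hML : M ≤ L := Real.log_le_log (by linarith) hn2
  have hX1 : 1 ≤ X := Real.one_le_rpow (by linarith) (by linarith)
  have hX0 : 0 < X := by linarith
  have hD1 : 0 < (K + 2) * L - M := by nlinarith
  have hD2 : 0 < (K + 3) * L - M := by nlinarith
  have e1 : 1 / L - (K + 1) / ((K + 2) * L - M) = (L - M) / (L * ((K + 2) * L - M)) := by
    rw [div_sub_div _ _ hL0.ne' hD1.ne']
    ring
  have e2 : (K + 2) / (X * ((K + 3) * L - M)) - 1 / (X * L)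
      = -((L - M) / (X * (L * ((K + 3) * L - M)))) := by
    field_simp
    ring
  have key : (L - M) / (X * (L * ((K + 3) * L - M))) ≤ (L - M) / (L * ((K + 2) * L - M)) := by
    apply div_le_div_of_nonneg_left (by linarith) (by positivity)
    have h1 : L * ((K + 2) * L - M) ≤ L * ((K + 3) * L - M) := by nlinarith
    have h2 : L * ((K + 3) * L - M) ≤ X * (L * ((K + 3) * L - M)) :=
      le_mul_of_one_le_left (by positivity) hX1
    linarith
  linarith [e1, e2, key]
end

section
/- For real w > 0 and real numbers 0 < a < b, ∫_{-∞}^{∞} (2x(b²-a²))/((x²+b²)(x²+a²)) · e^(2πiwx) dx = 2πi·(e^(-2πwa) - e^(-2πwb)). -/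
open Real Complex MeasureTheory Set Filter FourierTransform Topology

lemma ci_cexp_integrableOn (c : ℂ) (hc : 0 < c.re) :
    IntegrableOn (fun x : ℝ => Complex.exp (-(c * x))) (Ioi 0) := by
  apply Integrable.mono' (exp_neg_integrableOn_Ioi 0 hc)
  · exact (Complex.continuous_exp.comp (by continuity)).aestronglyMeasurable
  · filter_upwards with x
    simp [Complex.norm_exp]

lemma ci_integral_cexp_Ioi (c : ℂ) (hc : 0 < c.re) :
    ∫ x : ℝ in Ioi 0, Complex.exp (-(c * x)) = 1 / c := by
  have hc0 : c ≠ 0 := fun h => by simp [h] at hc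
  have hderiv : ∀ x ∈ Ioi (0:ℝ), HasDerivAt (fun x : ℝ => -Complex.exp (-(c * x)) / c)
      (Complex.exp (-(c * x))) x := by
    intro x _
    have h1 : HasDerivAt (fun x : ℝ => -(c * x) : ℝ → ℂ) (-c) x := by
      exact (((hasDerivAt_id (x:ℂ)).const_mul c).comp_ofReal.neg).congr_deriv (by simp)
    have h3 := (((Complex.hasDerivAt_exp _).comp x h1).neg).div_const c
    refine h3.congr_deriv ?_
    field_simp
  have hcont : ContinuousWithinAt (fun x : ℝ => -Complex.exp (-(c * x)) / c) (Ici 0) 0 := by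
    apply Continuous.continuousWithinAt
    exact ((Complex.continuous_exp.comp (by continuity)).neg).div_const c
  have htend : Tendsto (fun x : ℝ => -Complex.exp (-(c * x)) / c) atTop (𝓝 0) := by
    rw [tendsto_zero_iff_norm_tendsto_zero]
    have heq : (fun x : ℝ => ‖-Complex.exp (-(c * x)) / c‖)
        = fun x : ℝ => Real.exp (-(c.re * x)) / ‖c‖ := by
      ext x
      simp [Complex.norm_exp]
    rw [heq]
    have h1 : Tendsto (fun x : ℝ => -(c.re * x)) atTop atBot := by
      apply tendsto_neg_atBot_iff.mpr
      exact (tendsto_const_mul_atTop_of_pos hc).mpr tendsto_id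
    have h2 := (Real.tendsto_exp_atBot.comp h1).div_const ‖c‖
    simpa using h2
  have := integral_Ioi_of_hasDerivAt_of_tendsto hcont hderiv (ci_cexp_integrableOn c hc) htend
  rw [this]
  simp
  ring

lemma ci_helper_Ioi (c1 c2 : ℂ) (h1 : 0 < c1.re) (h2 : 0 < c2.re) (k : ℂ) (f : ℝ → ℂ)
    (hf : ∀ x ∈ Ioi (0:ℝ), f x = k * (Complex.exp (-(c1*x)) - Complex.exp (-(c2*x)))) :
    IntegrableOn f (Ioi 0) ∧ ∫ x in Ioi (0:ℝ), f x = k * (1/c1 - 1/c2) := by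
  have hint : IntegrableOn (fun x : ℝ => k * (Complex.exp (-(c1*x)) - Complex.exp (-(c2*x))))
      (Ioi 0) := ((ci_cexp_integrableOn c1 h1).sub (ci_cexp_integrableOn c2 h2)).const_mul k
  constructor
  · exact hint.congr_fun (fun x hx => (hf x hx).symm) measurableSet_Ioi
  · rw [setIntegral_congr_fun measurableSet_Ioi hf, MeasureTheory.integral_const_mul,
      integral_sub (ci_cexp_integrableOn c1 h1) (ci_cexp_integrableOn c2 h2),
      ci_integral_cexp_Ioi c1 h1, ci_integral_cexp_Ioi c2 h2]

lemma ci_integrableOn_Iic_of_neg {f : ℝ → ℂ} (h : IntegrableOn (fun x => f (-x)) (Ioi 0)) :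
    IntegrableOn f (Iic 0) := by
  rw [← Measure.map_neg_eq_self (volume : Measure ℝ)]
  have m : MeasurableEmbedding fun x : ℝ => -x := (Homeomorph.neg ℝ).measurableEmbedding
  rw [m.integrableOn_map_iff]
  simp_rw [Function.comp_def, neg_preimage, neg_Iic, neg_zero]
  exact (integrableOn_Ici_iff_integrableOn_Ioi).mpr h

lemma ci_integral_Iic_eq (f : ℝ → ℂ) :
    ∫ x in Iic (0:ℝ), f x = ∫ x in Ioi (0:ℝ), f (-x) := by
  rw [integral_comp_neg_Ioi]
  simp [integral_Iic_eq_integral_Iio]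

noncomputable def ciU (a b : ℝ) (x : ℝ) : ℂ :=
  2 * π * Complex.I * Real.sign x *
    ((Real.exp (-(2*π*a*|x|)) - Real.exp (-(2*π*b*|x|)) : ℝ) : ℂ)

lemma ci_inv_sub (c t : ℝ) (hc : 0 < c) :
    (1:ℂ)/(↑c + ↑t*Complex.I) - 1/(↑c - ↑t*Complex.I) = -2*t*Complex.I/(↑t^2 + ↑c^2) := by
  have h1 : ((c:ℂ) + ↑t*Complex.I) ≠ 0 := by
    intro h; have := congrArg Complex.re h; simp at this; exact hc.ne' this
  have h2 : ((c:ℂ) - ↑t*Complex.I) ≠ 0 := by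
    intro h; have := congrArg Complex.re h; simp at this; exact hc.ne' this
  have key : ((c:ℂ) + ↑t*Complex.I)*((c:ℂ) - ↑t*Complex.I) = (t:ℂ)^2 + (c:ℂ)^2 := by
    linear_combination (-(t:ℂ)^2) * Complex.I_sq
  rw [div_sub_div _ _ h1 h2, key]
  congr 1
  ring

section
variable (a b ξ : ℝ)

lemma ci_pointwise_Ioi (ha : 0 < a) (hb : 0 < b) : ∀ x ∈ Ioi (0:ℝ),
    Complex.exp (↑(-2 * π * x * ξ) * Complex.I) * ciU a b x
      = (2*π*Complex.I) *
        (Complex.exp (-((↑(2*π*a) + ↑(2*π*ξ)*Complex.I) * x))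
          - Complex.exp (-((↑(2*π*b) + ↑(2*π*ξ)*Complex.I) * x))) := by
  intro x hx
  rw [mem_Ioi] at hx
  have e1 : -((↑(2*π*a) + ↑(2*π*ξ)*Complex.I) * x)
      = ↑(-(2*π*a*x)) + ↑(-2*π*x*ξ)*Complex.I := by push_cast; ring
  have e2 : -((↑(2*π*b) + ↑(2*π*ξ)*Complex.I) * x)
      = ↑(-(2*π*b*x)) + ↑(-2*π*x*ξ)*Complex.I := by push_cast; ring
  rw [e1, e2, Complex.exp_add, Complex.exp_add, ciU, Real.sign_of_pos hx, abs_of_pos hx]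
  push_cast [Complex.ofReal_exp]
  ring

lemma ci_pointwise_Iic (ha : 0 < a) (hb : 0 < b) : ∀ x ∈ Ioi (0:ℝ),
    Complex.exp (↑(-2 * π * (-x) * ξ) * Complex.I) * ciU a b (-x)
      = (-(2*π*Complex.I)) *
        (Complex.exp (-((↑(2*π*a) - ↑(2*π*ξ)*Complex.I) * x))
          - Complex.exp (-((↑(2*π*b) - ↑(2*π*ξ)*Complex.I) * x))) := by
  intro x hx
  rw [mem_Ioi] at hx
  have e1 : -((↑(2*π*a) - ↑(2*π*ξ)*Complex.I) * x)
      = ↑(-(2*π*a*x)) + ↑(-2*π*(-x)*ξ)*Complex.I := by push_cast; ring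
  have e2 : -((↑(2*π*b) - ↑(2*π*ξ)*Complex.I) * x)
      = ↑(-(2*π*b*x)) + ↑(-2*π*(-x)*ξ)*Complex.I := by push_cast; ring
  rw [e1, e2, Complex.exp_add, Complex.exp_add, ciU,
    Real.sign_of_neg (neg_neg_iff_pos.mpr hx), abs_neg, abs_of_pos hx]
  push_cast [Complex.ofReal_exp]
  ring

end

section
variable (a b ξ : ℝ)

lemma ci_re1 (ha : 0 < a) : (0:ℝ) < ((↑(2*π*a) + ↑(2*π*ξ)*Complex.I)).re := by
  simp; positivity

lemma ci_re1' (ha : 0 < a) : (0:ℝ) < ((↑(2*π*a) - ↑(2*π*ξ)*Complex.I)).re := by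
  simp; positivity

lemma ci_integrand_integrable (ha : 0 < a) (hb : 0 < b) :
    Integrable (fun v : ℝ => Complex.exp (↑(-2 * π * v * ξ) * Complex.I) * ciU a b v) := by
  have hIoi := (ci_helper_Ioi _ _ (ci_re1 a ξ ha) (ci_re1 b ξ hb) _ _
    (ci_pointwise_Ioi a b ξ ha hb)).1
  have hIic := ci_integrableOn_Iic_of_neg
    (f := fun v : ℝ => Complex.exp (↑(-2 * π * v * ξ) * Complex.I) * ciU a b v)
    ((ci_helper_Ioi _ _ (ci_re1' a ξ ha) (ci_re1' b ξ hb) _ _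
      (ci_pointwise_Iic a b ξ ha hb)).1)
  have h := hIic.union hIoi
  rwa [Iic_union_Ioi, integrableOn_univ] at h

lemma ci_fourier (ha : 0 < a) (hb : 0 < b) :
    𝓕 (ciU a b) ξ
      = (2 * ξ * (b ^ 2 - a ^ 2)) / ((ξ ^ 2 + b ^ 2) * (ξ ^ 2 + a ^ 2)) := by
  have hIoi := ci_helper_Ioi _ _ (ci_re1 a ξ ha) (ci_re1 b ξ hb) _ _
    (ci_pointwise_Ioi a b ξ ha hb)
  have hIic' := ci_helper_Ioi _ _ (ci_re1' a ξ ha) (ci_re1' b ξ hb) _ _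
    (ci_pointwise_Iic a b ξ ha hb)
  have hIicInt := ci_integrableOn_Iic_of_neg
    (f := fun v : ℝ => Complex.exp (↑(-2 * π * v * ξ) * Complex.I) * ciU a b v) hIic'.1
  rw [Real.fourier_real_eq_integral_exp_smul]
  simp_rw [smul_eq_mul]
  rw [← intervalIntegral.integral_Iic_add_Ioi hIicInt hIoi.1, hIoi.2,
    ci_integral_Iic_eq (fun v : ℝ => Complex.exp (↑(-2 * π * v * ξ) * Complex.I) * ciU a b v),
    hIic'.2]
  have A := ci_inv_sub (2*π*a) (2*π*ξ) (by positivity)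
  have B := ci_inv_sub (2*π*b) (2*π*ξ) (by positivity)
  set X : ℂ := (↑(2*π*ξ))^2 + (↑(2*π*a))^2 with hX
  set Y : ℂ := (↑(2*π*ξ))^2 + (↑(2*π*b))^2 with hY
  have step1 : -(2*↑π*Complex.I) *
        ((1:ℂ)/(↑(2*π*a) - ↑(2*π*ξ)*Complex.I) - 1/(↑(2*π*b) - ↑(2*π*ξ)*Complex.I))
      + (2*↑π*Complex.I) *
        ((1:ℂ)/(↑(2*π*a) + ↑(2*π*ξ)*Complex.I) - 1/(↑(2*π*b) + ↑(2*π*ξ)*Complex.I))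
      = 2*↑π*Complex.I * ((-2*↑(2*π*ξ)*Complex.I)/X)
        - 2*↑π*Complex.I * ((-2*↑(2*π*ξ)*Complex.I)/Y) := by
    linear_combination (2*(π:ℂ)*Complex.I) * A - (2*(π:ℂ)*Complex.I) * B
  have hcast : ∀ c : ℝ, ((2*π*c:ℝ):ℂ)^2 = ((2*π*c)^2 : ℝ) := by intro c; norm_cast
  have hX2 : X = (((2*π*ξ)^2 + (2*π*a)^2 : ℝ) : ℂ) := by
    rw [hX, hcast, hcast]; push_cast; ring
  have hY2 : Y = (((2*π*ξ)^2 + (2*π*b)^2 : ℝ) : ℂ) := by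
    rw [hY, hcast, hcast]; push_cast; ring
  have step2 : ∀ (Z : ℂ), 2*↑π*Complex.I * ((-2*↑(2*π*ξ)*Complex.I)/Z)
      = (4*(π:ℂ)*↑(2*π*ξ))/Z := by
    intro Z
    linear_combination ((-4*(π:ℂ)*((2*π*ξ:ℝ):ℂ))/Z) * Complex.I_sq
  have hane : ((ξ:ℂ)^2 + (a:ℂ)^2) ≠ 0 := by
    have h : ((ξ:ℂ)^2 + (a:ℂ)^2) = ((ξ^2 + a^2 : ℝ) : ℂ) := by push_cast; ring
    rw [h]
    exact_mod_cast (by positivity : (ξ^2 + a^2 : ℝ) ≠ 0)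
  have hbne : ((ξ:ℂ)^2 + (b:ℂ)^2) ≠ 0 := by
    have h : ((ξ:ℂ)^2 + (b:ℂ)^2) = ((ξ^2 + b^2 : ℝ) : ℂ) := by push_cast; ring
    rw [h]
    exact_mod_cast (by positivity : (ξ^2 + b^2 : ℝ) ≠ 0)
  have hπ : (π:ℂ) ≠ 0 := by exact_mod_cast Real.pi_ne_zero
  have hSa : (((2*π*ξ)^2 + (2*π*a)^2 : ℝ) : ℂ) ≠ 0 :=
    Complex.ofReal_ne_zero.mpr (by positivity)
  have hSb : (((2*π*ξ)^2 + (2*π*b)^2 : ℝ) : ℂ) ≠ 0 :=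
    Complex.ofReal_ne_zero.mpr (by positivity)
  have hSa' : ((π:ℂ)^2*(ξ:ℂ)^2*4 + (π:ℂ)^2*(a:ℂ)^2*4) ≠ 0 := by
    have h : ((π:ℂ)^2*(ξ:ℂ)^2*4 + (π:ℂ)^2*(a:ℂ)^2*4) = ((π^2*ξ^2*4 + π^2*a^2*4 : ℝ):ℂ) := by
      push_cast; ring
    rw [h]; exact Complex.ofReal_ne_zero.mpr (by positivity)
  have hSb' : ((π:ℂ)^2*(ξ:ℂ)^2*4 + (π:ℂ)^2*(b:ℂ)^2*4) ≠ 0 := by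
    have h : ((π:ℂ)^2*(ξ:ℂ)^2*4 + (π:ℂ)^2*(b:ℂ)^2*4) = ((π^2*ξ^2*4 + π^2*b^2*4 : ℝ):ℂ) := by
      push_cast; ring
    rw [h]; exact Complex.ofReal_ne_zero.mpr (by positivity)
  rw [step1, step2, step2, hX2, hY2]
  push_cast
  have cast1 : ∀ c : ℝ, 0 < c → ((2*(π:ℂ)*↑ξ)^2 + (2*↑π*(c:ℂ))^2) ≠ 0 := by
    intro c hc
    have h : ((2*(π:ℂ)*↑ξ)^2 + (2*↑π*(c:ℂ))^2) = (((2*π*ξ)^2 + (2*π*c)^2 : ℝ) : ℂ) := by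
      push_cast; ring
    rw [h]
    exact Complex.ofReal_ne_zero.mpr (by positivity)
  have cast2 : ∀ c : ℝ, 0 < c → ((ξ:ℂ)^2 + (c:ℂ)^2) ≠ 0 := by
    intro c hc
    have h : ((ξ:ℂ)^2 + (c:ℂ)^2) = ((ξ^2 + c^2 : ℝ) : ℂ) := by push_cast; ring
    rw [h]
    exact Complex.ofReal_ne_zero.mpr (by positivity)
  rw [div_sub_div _ _ (cast1 a ha) (cast1 b hb), div_eq_div_iff
    (mul_ne_zero (cast1 a ha) (cast1 b hb)) (mul_ne_zero (cast2 b hb) (cast2 a ha))]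
  ring

end

section
variable (a b : ℝ)

lemma ci_integrable_u (ha : 0 < a) (hb : 0 < b) : Integrable (ciU a b) := by
  have h := ci_integrand_integrable a b 0 ha hb
  simpa using h

lemma ci_integrable_g (ha : 0 < a) (hab : a < b) :
    Integrable (fun ξ : ℝ =>
      ((2 * ξ * (b ^ 2 - a ^ 2)) / ((ξ ^ 2 + b ^ 2) * (ξ ^ 2 + a ^ 2)) : ℂ)) := by
  have hb : 0 < b := ha.trans hab
  have hne : ∀ (c : ℝ) (x : ℝ), 0 < c → ((x:ℂ)^2 + (c:ℂ)^2) ≠ 0 := by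
    intro c x hc
    have h : ((x:ℂ)^2 + (c:ℂ)^2) = ((x^2 + c^2 : ℝ) : ℂ) := by push_cast; ring
    rw [h]
    exact Complex.ofReal_ne_zero.mpr (by positivity)
  have hcont : Continuous (fun ξ : ℝ =>
      ((2 * ξ * (b ^ 2 - a ^ 2)) / ((ξ ^ 2 + b ^ 2) * (ξ ^ 2 + a ^ 2)) : ℂ)) := by
    apply Continuous.div (by continuity) (by continuity)
    intro x
    exact mul_ne_zero (hne b x hb) (hne a x ha)
  set C : ℝ := (b^2 - a^2) * ((1 + (a⁻¹)^2) * (1 + (b⁻¹)^2)) with hC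
  apply Integrable.mono' ((integrable_inv_one_add_sq).const_mul C)
    hcont.aestronglyMeasurable
  filter_upwards with x
  have hcast : ((2 * x * (b ^ 2 - a ^ 2)) / ((x ^ 2 + b ^ 2) * (x ^ 2 + a ^ 2)) : ℂ)
      = (((2 * x * (b ^ 2 - a ^ 2)) / ((x ^ 2 + b ^ 2) * (x ^ 2 + a ^ 2)) : ℝ) : ℂ) := by
    push_cast; ring
  have h4 : (0:ℝ) < 1 + x^2 := by positivity
  rw [hcast, Complex.norm_real, Real.norm_eq_abs, ← div_eq_mul_inv,
    abs_div, _root_.abs_of_pos (by positivity : (0:ℝ) < (x ^ 2 + b ^ 2) * (x ^ 2 + a ^ 2)),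
    div_le_div_iff₀ (by positivity : (0:ℝ) < (x ^ 2 + b ^ 2) * (x ^ 2 + a ^ 2)) h4]
  have h1 : |2 * x * (b ^ 2 - a ^ 2)| = 2 * |x| * (b^2 - a^2) := by
    rw [abs_mul, _root_.abs_of_nonneg (by nlinarith : (0:ℝ) ≤ b^2 - a^2)]
    simp [abs_mul]
  rw [h1]
  have h2' : 2 * |x| ≤ 1 + x^2 := by nlinarith [sq_nonneg (|x| - 1), _root_.sq_abs x]
  have h3a : 1 + x^2 ≤ (1 + (a⁻¹)^2) * (x^2 + a^2) := by
    have : a⁻¹^2 * a^2 = 1 := by field_simp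
    nlinarith [sq_nonneg x, sq_nonneg (x * a⁻¹)]
  have h3b : 1 + x^2 ≤ (1 + (b⁻¹)^2) * (x^2 + b^2) := by
    have : b⁻¹^2 * b^2 = 1 := by field_simp
    nlinarith [sq_nonneg x, sq_nonneg (x * b⁻¹)]
  have Q : 2 * |x| * (1+x^2) ≤ (1+x^2)*(1+x^2) := mul_le_mul_of_nonneg_right h2' h4.le
  have P : (1+x^2)*(1+x^2) ≤ ((1 + (a⁻¹)^2) * (x^2 + a^2)) * ((1 + (b⁻¹)^2) * (x^2 + b^2)) :=
    mul_le_mul h3a h3b h4.le (by positivity)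
  have R := mul_le_mul_of_nonneg_left (Q.trans P)
    (show (0:ℝ) ≤ b^2 - a^2 by nlinarith)
  calc 2 * |x| * (b^2-a^2) * (1+x^2) = (b^2-a^2) * (2 * |x| * (1+x^2)) := by ring
    _ ≤ (b^2-a^2) * (((1 + (a⁻¹)^2) * (x^2 + a^2)) * ((1 + (b⁻¹)^2) * (x^2 + b^2))) := R
    _ = C * ((x^2+b^2)*(x^2+a^2)) := by rw [hC]; ring
end

section
variable (a b w : ℝ)

lemma ci_continuousAt (hw : 0 < w) : ContinuousAt (ciU a b) w := by
  have hev : ∀ᶠ x in 𝓝 w, (fun x : ℝ => (2*(π:ℂ)*Complex.I) *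
      ((Real.exp (-(2*π*a*x)) : ℝ) - (Real.exp (-(2*π*b*x)) : ℝ))) x = ciU a b x := by
    filter_upwards [Ioi_mem_nhds hw] with x hx
    rw [mem_Ioi] at hx
    rw [ciU, Real.sign_of_pos hx, abs_of_pos hx]
    push_cast
    ring
  have hcont : ContinuousAt (fun x : ℝ => (2*(π:ℂ)*Complex.I) *
      ((Real.exp (-(2*π*a*x)) : ℝ) - (Real.exp (-(2*π*b*x)) : ℝ))) w := by
    apply Continuous.continuousAt
    continuity
  exact hcont.congr hev

lemma ci_value (hw : 0 < w) : ciU a b w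
    = 2 * π * Complex.I * (Complex.exp (-2 * π * w * a) - Complex.exp (-2 * π * w * b)) := by
  rw [ciU, Real.sign_of_pos hw, abs_of_pos hw]
  push_cast
  rw [show ((-(2*(π:ℂ)*↑a*↑w)) : ℂ) = -2*↑π*↑w*↑a by ring,
    show ((-(2*(π:ℂ)*↑b*↑w)) : ℂ) = -2*↑π*↑w*↑b by ring]
  ring

end

theorem contour_integral_one (w a b : ℝ) (hw : 0 < w) (ha : 0 < a) (hab : a < b) :
    ∫ x : ℝ, ((2 * x * (b ^ 2 - a ^ 2)) / ((x ^ 2 + b ^ 2) * (x ^ 2 + a ^ 2)) : ℂ)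
        * Complex.exp (2 * π * Complex.I * w * x)
      = 2 * π * Complex.I * (Complex.exp (-2 * π * w * a) - Complex.exp (-2 * π * w * b)) := by
  have hb : 0 < b := ha.trans hab
  have heq : 𝓕 (ciU a b) = fun ξ : ℝ =>
      ((2 * ξ * (b ^ 2 - a ^ 2)) / ((ξ ^ 2 + b ^ 2) * (ξ ^ 2 + a ^ 2)) : ℂ) :=
    funext fun ξ => ci_fourier a b ξ ha hb
  have hF : Integrable (𝓕 (ciU a b)) := by
    rw [heq]; exact ci_integrable_g a b ha hab
  have hinv := (ci_integrable_u a b ha hb).fourierInv_fourier_eq hF (ci_continuousAt a b w hw)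
  rw [heq, ci_value a b w hw] at hinv
  rw [← hinv, Real.fourierInv_eq_fourier_neg,
    Real.fourier_real_eq_integral_exp_smul]
  apply integral_congr_ae
  filter_upwards with x
  rw [smul_eq_mul, mul_comm]
  congr 1
  push_cast
  ring
end

section
/- For real numbers 0 < a < b, ∑_{n∈ℤ} log(((n+1/2)²+b²)/((n+1/2)²+a²)) = 2π(b-a) - 2·log((1+e^{-2πa})/(1+e^{-2πb})). -/
open Real Filter Finset Topology

lemma euler_sinh (x : ℝ) :
    Tendsto (fun n : ℕ => π * x * ∏ j ∈ Finset.range n, ((1:ℝ) + x^2/((j:ℝ)+1)^2))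
      atTop (𝓝 (Real.sinh (π * x))) := by
  have h := Complex.tendsto_euler_sin_prod (x * Complex.I)
  have hfun : ∀ n : ℕ,
      (↑π * (↑x * Complex.I) * ∏ j ∈ Finset.range n, ((1:ℂ) - (↑x*Complex.I)^2/((j:ℂ)+1)^2))
      = ((π * x * ∏ j ∈ Finset.range n, ((1:ℝ) + x^2/((j:ℝ)+1)^2) : ℝ) : ℂ) * Complex.I := by
    intro n
    have : ∀ j ∈ Finset.range n, ((1:ℂ) - (↑x*Complex.I)^2/((j:ℂ)+1)^2)
        = (((1:ℝ) + x^2/((j:ℝ)+1)^2 : ℝ) : ℂ) := by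
      intro j _
      push_cast
      rw [mul_pow, Complex.I_sq]
      ring
    rw [Finset.prod_congr rfl this, ← Complex.ofReal_prod]
    push_cast
    ring
  have hlim : Complex.sin (↑π * (↑x * Complex.I)) = ((Real.sinh (π*x) : ℝ) : ℂ) * Complex.I := by
    rw [show (↑π * (↑x * Complex.I)) = ((π*x : ℝ):ℂ) * Complex.I by push_cast; ring,
      Complex.sin_mul_I, Complex.ofReal_sinh]
  rw [funext hfun, hlim] at h
  have h2 := (Complex.continuous_im.tendsto _).comp h
  have e1 : (Complex.im ∘ fun n : ℕ =>
      ((π * x * ∏ j ∈ Finset.range n, ((1:ℝ) + x^2/((j:ℝ)+1)^2) : ℝ) : ℂ) * Complex.I)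
      = fun n : ℕ => π * x * ∏ j ∈ Finset.range n, ((1:ℝ) + x^2/((j:ℝ)+1)^2) := by
    funext n
    simp only [Function.comp_apply, Complex.mul_im, Complex.ofReal_im, Complex.ofReal_re,
      Complex.I_im, Complex.I_re, mul_one, mul_zero, zero_mul, add_zero]
  have e2 : ((((Real.sinh (π*x) : ℝ)) : ℂ) * Complex.I).im = Real.sinh (π*x) := by
    simp only [Complex.mul_im, Complex.ofReal_im, Complex.ofReal_re,
      Complex.I_im, Complex.I_re, mul_one, mul_zero, zero_mul, add_zero]
  rw [e1, e2] at h2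
  exact h2

lemma prod_tendsto_sinh_div (x : ℝ) (hx : x ≠ 0) :
    Tendsto (fun n : ℕ => ∏ j ∈ Finset.range n, ((1:ℝ) + x^2/((j:ℝ)+1)^2))
      atTop (𝓝 (Real.sinh (π * x) / (π * x))) := by
  have hπx : π * x ≠ 0 := mul_ne_zero Real.pi_ne_zero hx
  have := (euler_sinh x).div_const (π * x)
  simpa [mul_div_assoc, mul_div_cancel_left₀ _ hπx] using this

lemma prod_split (x : ℝ) (N : ℕ) :
    ∏ j ∈ Finset.range (2*N), ((1:ℝ) + (2*x)^2/((j:ℝ)+1)^2)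
      = (∏ j ∈ Finset.range N, ((1:ℝ) + x^2/((j:ℝ)+1)^2))
        * ∏ j ∈ Finset.range N, ((1:ℝ) + x^2/((j:ℝ)+1/2)^2) := by
  induction N with
  | zero => simp
  | succ n ih =>
    have key : ((1:ℝ) + (2*x)^2/(((2*n : ℕ):ℝ)+1)^2) * ((1:ℝ) + (2*x)^2/(((2*n+1 : ℕ):ℝ)+1)^2)
        = ((1:ℝ) + x^2/(((n:ℕ):ℝ)+1)^2) * ((1:ℝ) + x^2/(((n:ℕ):ℝ)+1/2)^2) := by
      push_cast
      have h1 : (2*(n:ℝ)+1) ≠ 0 := by positivity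
      have h2 : (2*(n:ℝ)+1+1) ≠ 0 := by positivity
      have h3 : ((n:ℝ)+1) ≠ 0 := by positivity
      have h4 : ((n:ℝ)+1/2) ≠ 0 := by positivity
      field_simp
      ring
    rw [Nat.mul_succ, Finset.prod_range_succ, Finset.prod_range_succ,
      Finset.prod_range_succ, Finset.prod_range_succ, ih, mul_mul_mul_comm, mul_assoc, key]

lemma prod_tendsto_cosh (x : ℝ) (hx : 0 < x) :
    Tendsto (fun N : ℕ => ∏ j ∈ Finset.range N, ((1:ℝ) + x^2/((j:ℝ)+1/2)^2))
      atTop (𝓝 (Real.cosh (π * x))) := by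
  have hQ := prod_tendsto_sinh_div x hx.ne'
  have h2Q : Tendsto (fun N : ℕ => ∏ j ∈ Finset.range (2*N), ((1:ℝ) + (2*x)^2/((j:ℝ)+1)^2))
      atTop (𝓝 (Real.sinh (π * (2*x)) / (π * (2*x)))) :=
    (prod_tendsto_sinh_div (2*x) (by positivity)).comp
      (tendsto_id.const_mul_atTop' zero_lt_two)
  have hsinh : Real.sinh (π * x) ≠ 0 := Real.sinh_ne_zero.mpr (by positivity)
  have hπx : π * x ≠ 0 := by positivity
  have hden : Real.sinh (π * x) / (π * x) ≠ 0 := div_ne_zero hsinh hπx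
  have h := h2Q.div hQ hden
  have hfun : (fun N : ℕ => (∏ j ∈ Finset.range (2*N), ((1:ℝ) + (2*x)^2/((j:ℝ)+1)^2)) /
      ∏ j ∈ Finset.range N, ((1:ℝ) + x^2/((j:ℝ)+1)^2))
      = fun N : ℕ => ∏ j ∈ Finset.range N, ((1:ℝ) + x^2/((j:ℝ)+1/2)^2) := by
    funext N
    have hP : (0:ℝ) < ∏ j ∈ Finset.range N, ((1:ℝ) + x^2/((j:ℝ)+1)^2) :=
      Finset.prod_pos fun j _ => by positivity
    rw [prod_split, mul_comm, mul_div_assoc, div_self hP.ne', mul_one]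
  have hlim : Real.sinh (π * (2*x)) / (π * (2*x)) / (Real.sinh (π * x) / (π * x))
      = Real.cosh (π * x) := by
    have h2 : Real.sinh (π * (2*x)) = 2 * Real.sinh (π * x) * Real.cosh (π * x) := by
      rw [show π * (2*x) = π * x + π * x by ring, Real.sinh_add]
      ring
    rw [h2]
    field_simp
  rw [hlim] at h
  exact h.congr fun N => congrFun hfun N

lemma hasSum_log_cosh (x : ℝ) (hx : 0 < x) :
    HasSum (fun n : ℕ => Real.log (1 + x^2/((n:ℝ)+1/2)^2)) (Real.log (Real.cosh (π * x))) := by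
  have hnn : ∀ n : ℕ, 0 ≤ Real.log (1 + x^2/((n:ℝ)+1/2)^2) := fun n =>
    Real.log_nonneg (le_add_of_nonneg_right (by positivity))
  rw [hasSum_iff_tendsto_nat_of_nonneg hnn]
  have hcont : ContinuousAt Real.log (Real.cosh (π * x)) :=
    Real.continuousAt_log (Real.cosh_pos _).ne'
  have h := (hcont.tendsto).comp (prod_tendsto_cosh x hx)
  have hfun : (Real.log ∘ fun N : ℕ => ∏ j ∈ Finset.range N, ((1:ℝ) + x^2/((j:ℝ)+1/2)^2))
      = fun N : ℕ => ∑ j ∈ Finset.range N, Real.log (1 + x^2/((j:ℝ)+1/2)^2) := by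
    funext N
    exact Real.log_prod fun j _ => by positivity
  rwa [hfun] at h

lemma log_cosh_eq (t : ℝ) :
    Real.log (Real.cosh t) = t + Real.log (1 + Real.exp (-2*t)) - Real.log 2 := by
  have h : Real.cosh t = Real.exp t * (1 + Real.exp (-2*t)) / 2 := by
    rw [Real.cosh_eq]
    congr 1
    rw [mul_add, mul_one, ← Real.exp_add]
    ring_nf
  rw [h, Real.log_div (by positivity) two_ne_zero,
    Real.log_mul (Real.exp_pos _).ne' (by positivity), Real.log_exp]

theorem sum_log_half_integers (a b : ℝ) (ha : 0 < a) (hab : a < b) :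
    ∑' n : ℤ, Real.log ((((n : ℝ) + 1/2) ^ 2 + b ^ 2) / (((n : ℝ) + 1/2) ^ 2 + a ^ 2))
      = 2 * π * (b - a)
        - 2 * Real.log ((1 + Real.exp (-2 * π * a)) / (1 + Real.exp (-2 * π * b))) := by
  have hb : 0 < b := ha.trans hab
  set F : ℤ → ℝ := fun n =>
    Real.log ((((n : ℝ) + 1/2) ^ 2 + b ^ 2) / (((n : ℝ) + 1/2) ^ 2 + a ^ 2)) with hF
  set m : ℝ := Real.log (Real.cosh (π * b)) - Real.log (Real.cosh (π * a)) with hm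
  have hc : ∀ n : ℤ, (0:ℝ) < ((n:ℝ)+1/2)^2 := by
    intro n
    have hne : ((n:ℝ)+1/2) ≠ 0 := by
      intro h
      have h1 : ((2*n+1 : ℤ):ℝ) = 0 := by push_cast; linarith
      have h2 : (2*n+1 : ℤ) = 0 := by exact_mod_cast h1
      omega
    positivity
  have hterm : ∀ n : ℤ, F n
      = Real.log (1 + b^2/((n:ℝ)+1/2)^2) - Real.log (1 + a^2/((n:ℝ)+1/2)^2) := by
    intro n
    have hcn := hc n
    rw [hF]
    simp only
    rw [Real.log_div (by positivity) (by positivity),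
      show 1 + b^2/((n:ℝ)+1/2)^2 = (((n:ℝ)+1/2)^2 + b^2)/((n:ℝ)+1/2)^2 by
        rw [add_div, div_self hcn.ne'],
      show 1 + a^2/((n:ℝ)+1/2)^2 = (((n:ℝ)+1/2)^2 + a^2)/((n:ℝ)+1/2)^2 by
        rw [add_div, div_self hcn.ne'],
      Real.log_div (by positivity) hcn.ne', Real.log_div (by positivity) hcn.ne']
    ring
  have hsb := hasSum_log_cosh b hb
  have hsa := hasSum_log_cosh a ha
  have hba := hsb.sub hsa
  have hnat : HasSum (fun n : ℕ => F (n : ℤ)) m := by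
    have e : (fun n : ℕ => F (n : ℤ))
        = fun n : ℕ => Real.log (1 + b^2/((n:ℝ)+1/2)^2) - Real.log (1 + a^2/((n:ℝ)+1/2)^2) := by
      funext n
      rw [hterm]
      norm_num
    rw [e]
    exact hba
  have hneg : HasSum (fun n : ℕ => F (-((n:ℤ) + 1))) m := by
    have e : (fun n : ℕ => F (-((n:ℤ) + 1))) = fun n : ℕ => F (n : ℤ) := by
      funext n
      rw [hF]
      simp only
      have : (((-((n:ℤ)+1)):ℤ):ℝ) + 1/2 = -((((n:ℤ)):ℝ) + 1/2) := by push_cast; ring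
      rw [this, neg_pow, show ((-1:ℝ))^2 = 1 by norm_num, one_mul]
    rw [e]
    exact hnat
  have htot : HasSum F (m + m) := hnat.of_nat_of_neg_add_one hneg
  rw [htot.tsum_eq, hm, log_cosh_eq, log_cosh_eq,
    Real.log_div (by positivity) (by positivity),
    show (-2*(π*b)) = -2*π*b by ring, show (-2*(π*a)) = -2*π*a by ring]
  ring
end

section
/- For real numbers 0 < a < b, ∑_{n∈ℤ} log((n²+b²)/(n²+a²)) = 2π(b-a) - 2·log((1-e^{-2πa})/(1-e^{-2πb})), where the n = 0 term is log(b²/a²). -/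
open Real
open Filter Finset Topology

lemma tendsto_sinh_prod (x : ℝ) (hx : 0 < x) :
    Tendsto (fun n : ℕ => ∏ j ∈ Finset.range n, ((1 : ℝ) + x ^ 2 / ((j : ℝ) + 1) ^ 2))
      atTop (𝓝 (Real.sinh (π * x) / (π * x))) := by
  have hC := Complex.tendsto_euler_sin_prod (x * Complex.I)
  have hne : (π * x * Complex.I : ℂ) ≠ 0 := by
    refine mul_ne_zero (mul_ne_zero ?_ ?_) Complex.I_ne_zero <;>
      simp [Complex.ofReal_ne_zero, Real.pi_ne_zero, ne_of_gt hx]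
  have h1 : Complex.sin (π * (x * Complex.I)) = Real.sinh (π * x) * Complex.I := by
    rw [← mul_assoc, ← Complex.ofReal_mul, Complex.sin_mul_I, Complex.ofReal_sinh]
  rw [h1] at hC
  have h2 : ∀ n : ℕ, (π * (x * Complex.I) * ∏ j ∈ Finset.range n,
      ((1 : ℂ) - (x * Complex.I) ^ 2 / ((j : ℂ) + 1) ^ 2))
      = (π * x * Complex.I) * Complex.ofReal (∏ j ∈ Finset.range n,
        ((1 : ℝ) + x ^ 2 / ((j : ℝ) + 1) ^ 2)) := by
    intro n
    rw [Complex.ofReal_prod, ← mul_assoc]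
    congr 1
    refine Finset.prod_congr rfl fun j _ => ?_
    have hI : (x * Complex.I) ^ 2 = -(x:ℂ)^2 := by
      rw [mul_pow, Complex.I_sq]; ring
    rw [hI]
    push_cast
    ring
  simp_rw [h2] at hC
  have hC2' := hC.const_mul ((π * x * Complex.I : ℂ))⁻¹
  have hC2 : Tendsto (fun n : ℕ => Complex.ofReal (∏ j ∈ Finset.range n,
      ((1 : ℝ) + x ^ 2 / ((j : ℝ) + 1) ^ 2))) atTop
      (𝓝 ((π * x * Complex.I : ℂ)⁻¹ * (Real.sinh (π * x) * Complex.I))) := by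
    refine hC2'.congr fun n => ?_
    rw [← mul_assoc, inv_mul_cancel₀ hne, one_mul]
  have h3 : (π * x * Complex.I : ℂ)⁻¹ * (Real.sinh (π * x) * Complex.I)
      = ((Real.sinh (π * x) / (π * x) : ℝ) : ℂ) := by
    have hpx : ((π : ℂ) * x) ≠ 0 := by
      refine mul_ne_zero ?_ ?_ <;> simp [Complex.ofReal_ne_zero, Real.pi_ne_zero, ne_of_gt hx]
    push_cast
    field_simp
  rw [h3] at hC2
  exact Filter.tendsto_ofReal_iff.mp hC2

lemma log_sinh_eq (t : ℝ) (ht : 0 < t) :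
    Real.log (Real.sinh t) = t + Real.log (1 - Real.exp (-2 * t)) - Real.log 2 := by
  have h1 : (0:ℝ) < 1 - Real.exp (-2 * t) := by
    have : Real.exp (-2 * t) < 1 := by
      rw [Real.exp_lt_one_iff]; nlinarith
    linarith
  have h2 : Real.sinh t = Real.exp t * (1 - Real.exp (-2 * t)) / 2 := by
    rw [Real.sinh_eq]
    have : Real.exp t * Real.exp (-2 * t) = Real.exp (-t) := by
      rw [← Real.exp_add]; ring_nf
    ring_nf at this ⊢
    field_simp
    ring_nf
    linarith [this]
  rw [h2, Real.log_div (by positivity) two_ne_zero,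
    Real.log_mul (by positivity) (ne_of_gt h1), Real.log_exp]

lemma hasSum_g (a b : ℝ) (ha : 0 < a) (hab : a < b) :
    HasSum (fun n : ℕ => Real.log ((((n:ℝ)+1) ^ 2 + b ^ 2) / (((n:ℝ)+1) ^ 2 + a ^ 2)))
      (Real.log ((Real.sinh (π * b) / (π * b)) / (Real.sinh (π * a) / (π * a)))) := by
  have hb : 0 < b := ha.trans hab
  set g : ℕ → ℝ := fun n => Real.log ((((n:ℝ)+1) ^ 2 + b ^ 2) / (((n:ℝ)+1) ^ 2 + a ^ 2)) with hg
  have hden : ∀ n : ℕ, (0:ℝ) < ((n:ℝ)+1) ^ 2 + a ^ 2 := fun n => by positivity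
  have hnum : ∀ n : ℕ, (0:ℝ) < ((n:ℝ)+1) ^ 2 + b ^ 2 := fun n => by positivity
  have hgnonneg : ∀ n, 0 ≤ g n := by
    intro n
    apply Real.log_nonneg
    rw [le_div_iff₀ (hden n)]
    nlinarith [sq_nonneg ((n:ℝ)+1)]
  have hsummable : Summable g := by
    have hmaj : Summable (fun n : ℕ => (b ^ 2 - a ^ 2) * (1 / ((n:ℝ)+1) ^ 2)) := by
      apply Summable.mul_left
      have := (Real.summable_one_div_nat_pow (p := 2)).mpr one_lt_two
      have h := (summable_nat_add_iff 1).mpr this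
      refine h.congr fun n => ?_
      push_cast
      ring
    refine Summable.of_nonneg_of_le hgnonneg (fun n => ?_) hmaj
    have hle := Real.log_le_sub_one_of_pos (div_pos (hnum n) (hden n))
    have : (((n:ℝ)+1) ^ 2 + b ^ 2) / (((n:ℝ)+1) ^ 2 + a ^ 2) - 1
        = (b ^ 2 - a ^ 2) / (((n:ℝ)+1) ^ 2 + a ^ 2) := by
      field_simp
      ring
    rw [this] at hle
    refine hle.trans ?_
    rw [mul_one_div]
    apply div_le_div_of_nonneg_left (by nlinarith) (by positivity)
    nlinarith [sq_nonneg a]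
  -- limit of partial sums
  have hLa : (0:ℝ) < Real.sinh (π * a) / (π * a) := by
    apply div_pos (Real.sinh_pos_iff.mpr (by positivity)) (by positivity)
  have hLb : (0:ℝ) < Real.sinh (π * b) / (π * b) := by
    apply div_pos (Real.sinh_pos_iff.mpr (by positivity)) (by positivity)
  have hprod : Tendsto (fun n : ℕ => ∏ j ∈ Finset.range n,
      ((((j:ℝ)+1) ^ 2 + b ^ 2) / (((j:ℝ)+1) ^ 2 + a ^ 2))) atTop
      (𝓝 ((Real.sinh (π * b) / (π * b)) / (Real.sinh (π * a) / (π * a)))) := by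
    have h := (tendsto_sinh_prod b hb).div (tendsto_sinh_prod a ha) (ne_of_gt hLa)
    refine h.congr fun n => ?_
    simp only [Pi.div_apply]
    rw [← Finset.prod_div_distrib]
    refine Finset.prod_congr rfl fun j _ => ?_
    have hj : ((j:ℝ)+1) ≠ 0 := by positivity
    field_simp
  have hlog : Tendsto (fun n : ℕ => ∑ j ∈ Finset.range n, g j) atTop
      (𝓝 (Real.log ((Real.sinh (π * b) / (π * b)) / (Real.sinh (π * a) / (π * a))))) := by
    have hc : Tendsto (fun n : ℕ => Real.log (∏ j ∈ Finset.range n,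
        ((((j:ℝ)+1) ^ 2 + b ^ 2) / (((j:ℝ)+1) ^ 2 + a ^ 2)))) atTop
        (𝓝 (Real.log ((Real.sinh (π * b) / (π * b)) / (Real.sinh (π * a) / (π * a))))) :=
      ((Real.continuousAt_log (ne_of_gt (div_pos hLb hLa))).tendsto).comp hprod
    refine hc.congr fun n => ?_
    rw [Real.log_prod]
    intro j _
    exact ne_of_gt (div_pos (hnum j) (hden j))
  have := tendsto_nhds_unique hsummable.hasSum.tendsto_sum_nat hlog
  rw [← this]
  exact hsummable.hasSum

theorem sum_log_integers (a b : ℝ) (ha : 0 < a) (hab : a < b) :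
    ∑' n : ℤ, Real.log (((n : ℝ) ^ 2 + b ^ 2) / ((n : ℝ) ^ 2 + a ^ 2))
      = 2 * π * (b - a)
        - 2 * Real.log ((1 - Real.exp (-2 * π * a)) / (1 - Real.exp (-2 * π * b))) := by
  have hb : 0 < b := ha.trans hab
  have hG := hasSum_g a b ha hab
  set L : ℝ := Real.log ((Real.sinh (π * b) / (π * b)) / (Real.sinh (π * a) / (π * a))) with hL
  set f : ℤ → ℝ := fun n => Real.log (((n : ℝ) ^ 2 + b ^ 2) / ((n : ℝ) ^ 2 + a ^ 2)) with hf
  have hshift : ∀ n : ℕ, f (n + 1) = Real.log ((((n:ℝ)+1) ^ 2 + b ^ 2) / (((n:ℝ)+1) ^ 2 + a ^ 2)) := by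
    intro n; simp only [hf]; push_cast; ring_nf
  have hneg : ∀ n : ℕ, f (-(n + 1)) = Real.log ((((n:ℝ)+1) ^ 2 + b ^ 2) / (((n:ℝ)+1) ^ 2 + a ^ 2)) := by
    intro n; simp only [hf]; push_cast; ring_nf
  have hshiftsum : HasSum (fun n : ℕ => f (n + 1)) L := hG.congr_fun fun n => hshift n
  have hnat : HasSum (fun n : ℕ => f n) (L + f 0) := by
    have := (hasSum_nat_add_iff (f := fun n : ℕ => f n) 1).mp hshiftsum
    simpa using this
  have hnegsum : HasSum (fun n : ℕ => f (-(n + 1))) L := hG.congr_fun fun n => hneg n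
  have htot : HasSum f ((L + f 0) + L) := HasSum.of_nat_of_neg_add_one hnat hnegsum
  rw [htot.tsum_eq]
  -- now the algebra
  have h2a : (0:ℝ) < 1 - Real.exp (-2 * π * a) := by
    have : Real.exp (-2 * π * a) < 1 := by rw [Real.exp_lt_one_iff]; nlinarith [Real.pi_pos]
    linarith
  have h2b : (0:ℝ) < 1 - Real.exp (-2 * π * b) := by
    have : Real.exp (-2 * π * b) < 1 := by rw [Real.exp_lt_one_iff]; nlinarith [Real.pi_pos]
    linarith
  have hpa : (0:ℝ) < π * a := by positivity
  have hpb : (0:ℝ) < π * b := by positivity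
  have hsa : (0:ℝ) < Real.sinh (π * a) := Real.sinh_pos_iff.mpr hpa
  have hsb : (0:ℝ) < Real.sinh (π * b) := Real.sinh_pos_iff.mpr hpb
  have e0 : f 0 = 2 * Real.log b - 2 * Real.log a := by
    simp only [hf]
    norm_num
    rw [Real.log_div (by positivity) (by positivity), Real.log_pow, Real.log_pow]
    push_cast; ring
  have eL : L = π * b - π * a + Real.log (1 - Real.exp (-2 * π * b))
      - Real.log (1 - Real.exp (-2 * π * a)) - Real.log b + Real.log a := by
    have hb' : Real.log (Real.sinh (π * b)) = π * b + Real.log (1 - Real.exp (-2 * π * b)) - Real.log 2 := by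
      have := log_sinh_eq (π * b) hpb
      rw [this]; congr 2; ring
    have ha' : Real.log (Real.sinh (π * a)) = π * a + Real.log (1 - Real.exp (-2 * π * a)) - Real.log 2 := by
      have := log_sinh_eq (π * a) hpa
      rw [this]; congr 2; ring
    rw [hL, Real.log_div (by positivity) (by positivity),
      Real.log_div (by positivity) (by positivity), Real.log_div (by positivity) (by positivity),
      Real.log_mul (ne_of_gt Real.pi_pos) (by positivity),
      Real.log_mul (ne_of_gt Real.pi_pos) (by positivity), hb', ha']
    ring
  rw [Real.log_div (ne_of_gt h2a) (ne_of_gt h2b), e0, eL]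
  ring
end

section
/- For 1/2 < α < 1 and real x ≥ 2, ∫₂^x dt/(t^α · log t) ≤ x^{1-α}/((1-α)·log x) + log log x + C·( x^{1-α}/((1-α)²·(log x)²) + 1 ) for some absolute constant C. -/
open Real intervalIntegral

namespace AppendixA1
open MeasureTheory Set

lemma contOn_shape {a b : ℝ} (ha : (2:ℝ) ≤ a) (p : ℝ) (n : ℕ) :
    ContinuousOn (fun t : ℝ => 1 / (t ^ p * Real.log t ^ n)) (Set.Icc a b) := by
  have hne : ∀ t ∈ Set.Icc a b, t ≠ 0 := fun t ht => by
    have := ht.1; intro h; rw [h] at this; linarith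
  apply ContinuousOn.div continuousOn_const
  · exact (continuousOn_id.rpow_const fun t ht => Or.inl (hne t ht)).mul
      ((Real.continuousOn_log.mono fun t ht => hne t ht).pow n)
  · intro t ht
    have ht2 : (2:ℝ) ≤ t := le_trans ha ht.1
    have ht0 : (0:ℝ) < t := by linarith
    have hl : 0 < Real.log t := Real.log_pos (by linarith)
    exact mul_ne_zero (Real.rpow_pos_of_pos ht0 p).ne' (pow_ne_zero n hl.ne')

lemma ii_shape {a b : ℝ} (ha : (2:ℝ) ≤ a) (hab : a ≤ b) (p : ℝ) (n : ℕ) :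
    IntervalIntegrable (fun t : ℝ => 1 / (t ^ p * Real.log t ^ n)) volume a b := by
  apply ContinuousOn.intervalIntegrable
  rw [Set.uIcc_of_le hab]
  exact contOn_shape ha p n

lemma integral_loglog {a b : ℝ} (ha : (2:ℝ) ≤ a) (hab : a ≤ b) :
    ∫ t in a..b, 1 / (t * Real.log t)
      = Real.log (Real.log b) - Real.log (Real.log a) := by
  apply intervalIntegral.integral_eq_sub_of_hasDerivAt
  · intro t ht
    rw [Set.uIcc_of_le hab] at ht
    have ht2 : (2:ℝ) ≤ t := le_trans ha ht.1
    have ht0 : (0:ℝ) < t := by linarith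
    have hl : 0 < Real.log t := Real.log_pos (by linarith)
    have h := (Real.hasDerivAt_log hl.ne').comp t (Real.hasDerivAt_log ht0.ne')
    refine h.congr_deriv ?_
    field_simp
  · have := ii_shape ha hab 1 1
    simpa [Real.rpow_one] using this

lemma integral_one_div_rpow {a b α : ℝ} (ha : (2:ℝ) ≤ a) (hab : a ≤ b) (hα : α < 1) :
    ∫ t in a..b, 1 / t ^ α = (b ^ (1-α) - a ^ (1-α)) / (1-α) := by
  rw [show (∫ t in a..b, 1 / t ^ α) = ∫ t in a..b, t ^ (-α) from ?_]
  · rw [integral_rpow (Or.inl (by linarith)), show -α + 1 = 1 - α from by ring]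
  · apply intervalIntegral.integral_congr
    intro t ht
    rw [Set.uIcc_of_le hab] at ht
    have ht0 : (0:ℝ) ≤ t := by have := ht.1; linarith
    simp [Real.rpow_neg ht0, one_div]

lemma integral_invlogsq {a b : ℝ} (ha : (2:ℝ) ≤ a) (hab : a ≤ b) :
    ∫ t in a..b, 1 / (t * Real.log t ^ 2)
      = (Real.log a)⁻¹ - (Real.log b)⁻¹ := by
  have : ∫ t in a..b, 1 / (t * Real.log t ^ 2)
      = (-(Real.log b)⁻¹) - (-(Real.log a)⁻¹) := by
    apply intervalIntegral.integral_eq_sub_of_hasDerivAt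
    · intro t ht
      rw [Set.uIcc_of_le hab] at ht
      have ht2 : (2:ℝ) ≤ t := le_trans ha ht.1
      have ht0 : (0:ℝ) < t := by linarith
      have hl : 0 < Real.log t := Real.log_pos (by linarith)
      have h := ((Real.hasDerivAt_log ht0.ne').inv hl.ne').neg
      refine h.congr_deriv ?_
      field_simp
    · simpa [Real.rpow_one] using ii_shape ha hab 1 2
  rw [this]; ring

lemma hasDerivAt_F {α t : ℝ} (hα : α < 1) (ht : (2:ℝ) ≤ t) :
    HasDerivAt (fun s : ℝ => s ^ (1-α) / ((1-α) * Real.log s))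
      (1 / (t ^ α * Real.log t) - (1/(1-α)) * (1 / (t ^ α * Real.log t ^ 2))) t := by
  have ht0 : (0:ℝ) < t := by linarith
  have hl : 0 < Real.log t := Real.log_pos (by linarith)
  have hβ : 0 < 1 - α := by linarith
  have h1 : HasDerivAt (fun s : ℝ => s ^ (1-α)) ((1-α) * t ^ (1-α-1)) t :=
    Real.hasDerivAt_rpow_const (Or.inl ht0.ne')
  have h2 : HasDerivAt (fun s : ℝ => (1-α) * Real.log s) ((1-α) * t⁻¹) t :=
    (Real.hasDerivAt_log ht0.ne').const_mul _
  have h3 := h1.div h2 (mul_ne_zero hβ.ne' hl.ne')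
  refine h3.congr_deriv ?_
  have hta : (0:ℝ) < t ^ α := Real.rpow_pos_of_pos ht0 α
  have key : t ^ (1-α-1) * t ^ α = 1 := by
    rw [← Real.rpow_add ht0]; norm_num
  have key2 : t ^ (1-α) = t ^ (1-α-1) * t := by
    rw [← Real.rpow_add_one ht0.ne']; ring_nf
  have hA : t ^ (1-α-1) = (t ^ α)⁻¹ := eq_inv_of_mul_eq_one_left key
  rw [key2, hA]
  field_simp

lemma pointwise1 {α t : ℝ} (hα1 : α < 1) (ht : (2:ℝ) ≤ t) :
    1 / (t ^ α * Real.log t) ≤ 1 / (t * Real.log t) + (1-α) * (1 / t ^ α) := by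
  have ht0 : (0:ℝ) < t := by linarith
  have hl : 0 < Real.log t := Real.log_pos (by linarith)
  have hβ : 0 ≤ (1-α) * Real.log t := by nlinarith
  have hta : (0:ℝ) < t ^ α := Real.rpow_pos_of_pos ht0 α
  have e1 : t ^ α = t * Real.exp (-((1-α) * Real.log t)) := by
    rw [Real.rpow_def_of_pos ht0]
    calc Real.exp (Real.log t * α)
        = Real.exp (Real.log t + -((1-α) * Real.log t)) := by ring_nf
      _ = Real.exp (Real.log t) * Real.exp (-((1-α) * Real.log t)) := Real.exp_add _ _
      _ = t * Real.exp (-((1-α) * Real.log t)) := by rw [Real.exp_log ht0]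
  have e2 : -((1-α) * Real.log t) + 1 ≤ Real.exp (-((1-α) * Real.log t)) :=
    Real.add_one_le_exp _
  have h : t ≤ t ^ α + (1-α) * Real.log t * t := by
    rw [e1]; nlinarith
  have expand : 1 / (t * Real.log t) + (1-α) * (1 / t ^ α) - 1 / (t ^ α * Real.log t)
      = (t ^ α + (1-α) * Real.log t * t - t) / (t * Real.log t * t ^ α) := by
    field_simp
  have hpos : 0 ≤ (t ^ α + (1-α) * Real.log t * t - t) / (t * Real.log t * t ^ α) :=
    div_nonneg (by linarith) (by positivity)
  linarith

lemma pointwise2 {α x t : ℝ} (hα1 : α < 1) (ht : (2:ℝ) ≤ t) (htx : t ≤ x) :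
    1 / (t ^ α * Real.log t ^ 2) ≤
      x ^ ((1-α)/2) * (1 / (t * Real.log t ^ 2)) + 4 / Real.log x ^ 2 * (1 / t ^ α) := by
  have ht0 : (0:ℝ) < t := by linarith
  have hx0 : (0:ℝ) < x := by linarith
  have hl : 0 < Real.log t := Real.log_pos (by linarith)
  have hlx : 0 < Real.log x := Real.log_pos (by linarith)
  have hta : (0:ℝ) < t ^ α := Real.rpow_pos_of_pos ht0 α
  have hβ : 0 < 1 - α := by linarith
  rcases le_or_gt (t*t) x with h | h
  · have hlog2 : Real.log t ≤ Real.log x / 2 := by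
      have h2 := Real.log_le_log (by positivity) h
      rw [Real.log_mul ht0.ne' ht0.ne'] at h2
      linarith
    have hb : t ^ (1-α) ≤ x ^ ((1-α)/2) := by
      rw [Real.rpow_def_of_pos ht0, Real.rpow_def_of_pos hx0]
      apply Real.exp_le_exp.2
      nlinarith
    have key : t ^ α * t ^ (1-α) = t := by
      rw [← Real.rpow_add ht0]; norm_num
    have e : 1 / (t ^ α * Real.log t ^ 2) = t ^ (1-α) * (1 / (t * Real.log t ^ 2)) := by
      rw [mul_one_div, div_eq_div_iff (by positivity) (by positivity)]
      linear_combination (-Real.log t ^ 2) * key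
    calc 1 / (t ^ α * Real.log t ^ 2)
        = t ^ (1-α) * (1 / (t * Real.log t ^ 2)) := e
      _ ≤ x ^ ((1-α)/2) * (1 / (t * Real.log t ^ 2)) := by
          apply mul_le_mul_of_nonneg_right hb (by positivity)
      _ ≤ _ := le_add_of_nonneg_right (by positivity)
  · have hlx2 : Real.log x ≤ 2 * Real.log t := by
      have h2 := Real.log_le_log hx0 h.le
      rw [Real.log_mul ht0.ne' ht0.ne'] at h2
      linarith
    have expand : 4 / Real.log x ^ 2 * (1 / t ^ α) - 1 / (t ^ α * Real.log t ^ 2)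
        = (4 * Real.log t ^ 2 - Real.log x ^ 2) / (t ^ α * Real.log t ^ 2 * Real.log x ^ 2) := by
      field_simp
    have hnn : 0 ≤ (4 * Real.log t ^ 2 - Real.log x ^ 2) / (t ^ α * Real.log t ^ 2 * Real.log x ^ 2) :=
      div_nonneg (by nlinarith) (by positivity)
    calc 1 / (t ^ α * Real.log t ^ 2) ≤ 4 / Real.log x ^ 2 * (1 / t ^ α) := by linarith
      _ ≤ _ := le_add_of_nonneg_left (by positivity)

lemma halfpow_le {β x : ℝ} (hβ : 0 < β) (hx : (2:ℝ) ≤ x) :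
    x ^ (β/2) / 2 ≤ 8 * (x ^ β / (β^2 * Real.log x ^ 2)) := by
  have hx0 : (0:ℝ) < x := by linarith
  have hlx : 0 < Real.log x := Real.log_pos (by linarith)
  set u := β * Real.log x with hu
  have hu0 : 0 < u := by positivity
  have hX : x ^ (β/2) = Real.exp (u/2) := by
    rw [Real.rpow_def_of_pos hx0, show Real.log x * (β/2) = u/2 from by rw [hu]; ring]
  have hXX : x ^ β = Real.exp (u/2) * Real.exp (u/2) := by
    rw [Real.rpow_def_of_pos hx0, ← Real.exp_add, show Real.log x * β = u/2 + u/2 from by rw [hu]; ring]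
  have h14 : 1 + u/4 ≤ Real.exp (u/4) := by linarith [Real.add_one_le_exp (u/4)]
  have hexp : Real.exp (u/2) = Real.exp (u/4) * Real.exp (u/4) := by
    rw [← Real.exp_add]; ring_nf
  have hE0 : 0 < Real.exp (u/2) := Real.exp_pos _
  have hkey : u^2 ≤ 16 * Real.exp (u/2) := by nlinarith [Real.exp_pos (u/4)]
  have hu2 : β^2 * Real.log x ^ 2 = u^2 := by rw [hu]; ring
  rw [hX, hXX, hu2, div_le_iff₀ (by norm_num : (0:ℝ) < 2)]
  rw [show 8 * (Real.exp (u/2) * Real.exp (u/2) / u^2) * 2 = 16 * (Real.exp (u/2) * Real.exp (u/2)) / u^2 from by ring]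
  rw [le_div_iff₀ (by positivity)]
  nlinarith

end AppendixA1

set_option maxHeartbeats 1000000 in
open AppendixA1 MeasureTheory in
theorem appendix_A1 :
    ∃ C : ℝ, ∀ α x : ℝ, 1/2 < α → α < 1 → 2 ≤ x →
      ∫ t in (2 : ℝ)..x, 1 / (t ^ α * Real.log t)
        ≤ x ^ (1 - α) / ((1 - α) * Real.log x) + Real.log (Real.log x)
          + C * (x ^ (1 - α) / ((1 - α) ^ 2 * (Real.log x) ^ 2) + 1) := by
  use 16
  intro α x hα2 hα1 hx
  have hβ0 : 0 < 1 - α := by linarith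
  have hβh : 1 - α < 1/2 := by linarith
  have hx0 : (0:ℝ) < x := by linarith
  have hlx : 0 < Real.log x := Real.log_pos (by linarith)
  have he1 : (2:ℝ) ≤ Real.exp 1 := by nlinarith [Real.exp_one_gt_d9]
  have he2 : Real.exp 2 ≤ 8 := by
    have h1 : Real.exp 1 ≤ 2.7182818286 := (Real.exp_one_lt_d9).le
    have : Real.exp 2 = Real.exp 1 * Real.exp 1 := by rw [← Real.exp_add]; norm_num
    nlinarith [Real.exp_pos 1]
  have hll2 : (-1:ℝ) ≤ Real.log (Real.log 2) := by
    have hl2 : 0 < Real.log 2 := Real.log_pos (by norm_num)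
    have h : Real.exp (-1) ≤ Real.log 2 := by
      rw [Real.exp_neg]
      have h2 : (Real.exp 1)⁻¹ ≤ (2:ℝ)⁻¹ := inv_anti₀ (by norm_num) he1
      nlinarith [Real.log_two_gt_d9]
    exact (Real.le_log_iff_exp_le hl2).mpr h
  have hT : 0 ≤ x ^ (1-α) / ((1-α)^2 * Real.log x ^ 2) := by positivity
  have hmain : 0 ≤ x ^ (1-α) / ((1-α) * Real.log x) := by positivity
  set y := Real.exp (2/(1-α)) with hy
  have hly : Real.log y = 2/(1-α) := Real.log_exp _
  have h2β : (1:ℝ) ≤ 2/(1-α) := by rw [le_div_iff₀ hβ0]; linarith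
  have hy2 : (2:ℝ) ≤ y := le_trans he1 (Real.exp_le_exp.2 h2β)
  have hy0 : (0:ℝ) < y := by linarith
  have hyb : y ^ (1-α) = Real.exp 2 := by
    rw [hy, ← Real.exp_mul, show 2/(1-α) * (1-α) = 2 from by field_simp]
  -- integrability on [2,x]
  rcases le_or_gt x y with hxy | hyx
  · -- small x case
    have hf_int : IntervalIntegrable (fun t : ℝ => 1 / (t ^ α * Real.log t)) volume 2 x := by
      simpa using ii_shape le_rfl hx α 1
    have hB_int : IntervalIntegrable (fun t : ℝ => 1 / (t * Real.log t)) volume 2 x := by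
      simpa using ii_shape le_rfl hx 1 1
    have hC_int : IntervalIntegrable (fun t : ℝ => 1 / t ^ α) volume 2 x := by
      simpa using ii_shape le_rfl hx α 0
    have hmono : ∫ t in (2:ℝ)..x, 1 / (t ^ α * Real.log t)
        ≤ ∫ t in (2:ℝ)..x, (1 / (t * Real.log t) + (1-α) * (1 / t ^ α)) := by
      apply intervalIntegral.integral_mono_on hx hf_int
        (hB_int.add (hC_int.const_mul _))
      intro t ht
      exact pointwise1 hα1 ht.1
    have hsplit : ∫ t in (2:ℝ)..x, (1 / (t * Real.log t) + (1-α) * (1 / t ^ α))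
        = (Real.log (Real.log x) - Real.log (Real.log 2)) + (1-α) * ((x ^ (1-α) - 2 ^ (1-α)) / (1-α)) := by
      rw [intervalIntegral.integral_add hB_int (hC_int.const_mul _),
        intervalIntegral.integral_const_mul, integral_loglog le_rfl hx,
        integral_one_div_rpow le_rfl hx hα1]
    have hxβ : x ^ (1-α) ≤ Real.exp 2 := by
      calc x ^ (1-α) ≤ y ^ (1-α) := Real.rpow_le_rpow hx0.le hxy hβ0.le
        _ = Real.exp 2 := hyb
    have h2β0 : (0:ℝ) ≤ 2 ^ (1-α) := by positivity
    have hfin : (1-α) * ((x ^ (1-α) - 2 ^ (1-α)) / (1-α)) = x ^ (1-α) - 2 ^ (1-α) := by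
      field_simp
    nlinarith [hmono, hsplit, hxβ, h2β0, hT, hmain]
  · -- large x case
    have hxy : y ≤ x := hyx.le
    have hf_int2y : IntervalIntegrable (fun t : ℝ => 1 / (t ^ α * Real.log t)) volume 2 y := by
      simpa using ii_shape le_rfl hy2 α 1
    have hf_intyx : IntervalIntegrable (fun t : ℝ => 1 / (t ^ α * Real.log t)) volume y x := by
      simpa using ii_shape hy2 hxy α 1
    have hB_int : IntervalIntegrable (fun t : ℝ => 1 / (t * Real.log t)) volume 2 y := by
      simpa using ii_shape le_rfl hy2 1 1
    have hC_int : IntervalIntegrable (fun t : ℝ => 1 / t ^ α) volume 2 y := by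
      simpa using ii_shape le_rfl hy2 α 0
    have hC_intyx : IntervalIntegrable (fun t : ℝ => 1 / t ^ α) volume y x := by
      simpa using ii_shape hy2 hxy α 0
    have hD_intyx : IntervalIntegrable (fun t : ℝ => 1 / (t * Real.log t ^ 2)) volume y x := by
      simpa using ii_shape hy2 hxy 1 2
    have hE_intyx : IntervalIntegrable (fun t : ℝ => 1 / (t ^ α * Real.log t ^ 2)) volume y x :=
      ii_shape hy2 hxy α 2
    -- split the integral
    have hadj := intervalIntegral.integral_add_adjacent_intervals hf_int2y hf_intyx
    -- part 1
    have hmono1 : ∫ t in (2:ℝ)..y, 1 / (t ^ α * Real.log t)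
        ≤ ∫ t in (2:ℝ)..y, (1 / (t * Real.log t) + (1-α) * (1 / t ^ α)) := by
      apply intervalIntegral.integral_mono_on hy2 hf_int2y
        (hB_int.add (hC_int.const_mul _))
      intro t ht
      exact pointwise1 hα1 ht.1
    have hsplit1 : ∫ t in (2:ℝ)..y, (1 / (t * Real.log t) + (1-α) * (1 / t ^ α))
        = (Real.log (Real.log y) - Real.log (Real.log 2)) + (1-α) * ((y ^ (1-α) - 2 ^ (1-α)) / (1-α)) := by
      rw [intervalIntegral.integral_add hB_int (hC_int.const_mul _),
        intervalIntegral.integral_const_mul, integral_loglog le_rfl hy2,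
        integral_one_div_rpow le_rfl hy2 hα1]
    have hlyx : Real.log (Real.log y) ≤ Real.log (Real.log x) := by
      apply Real.log_le_log (by rw [hly]; positivity)
      exact Real.log_le_log hy0 hxy
    have h2β0 : (0:ℝ) ≤ 2 ^ (1-α) := by positivity
    have hfin1 : (1-α) * ((y ^ (1-α) - 2 ^ (1-α)) / (1-α)) = y ^ (1-α) - 2 ^ (1-α) := by
      field_simp
    have hpart1 : ∫ t in (2:ℝ)..y, 1 / (t ^ α * Real.log t)
        ≤ Real.log (Real.log x) - Real.log (Real.log 2) + Real.exp 2 := by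
      rw [hsplit1, hfin1] at hmono1
      rw [hyb] at hmono1
      linarith
    -- part 2 via integration by parts identity
    have hftc : ∫ t in y..x, (1 / (t ^ α * Real.log t) - (1/(1-α)) * (1 / (t ^ α * Real.log t ^ 2)))
        = x ^ (1-α) / ((1-α) * Real.log x) - y ^ (1-α) / ((1-α) * Real.log y) := by
      apply intervalIntegral.integral_eq_sub_of_hasDerivAt
      · intro t ht
        rw [Set.uIcc_of_le hxy] at ht
        exact hasDerivAt_F hα1 (le_trans hy2 ht.1)
      · exact hf_intyx.sub (hE_intyx.const_mul _)
    have hsub : ∫ t in y..x, (1 / (t ^ α * Real.log t) - (1/(1-α)) * (1 / (t ^ α * Real.log t ^ 2)))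
        = (∫ t in y..x, 1 / (t ^ α * Real.log t))
          - (1/(1-α)) * ∫ t in y..x, 1 / (t ^ α * Real.log t ^ 2) := by
      rw [intervalIntegral.integral_sub hf_intyx (hE_intyx.const_mul _),
        intervalIntegral.integral_const_mul]
    -- bound on ∫ E
    have hmono2 : ∫ t in y..x, 1 / (t ^ α * Real.log t ^ 2)
        ≤ ∫ t in y..x, (x ^ ((1-α)/2) * (1 / (t * Real.log t ^ 2)) + 4 / Real.log x ^ 2 * (1 / t ^ α)) := by
      apply intervalIntegral.integral_mono_on hxy hE_intyx
        ((hD_intyx.const_mul _).add (hC_intyx.const_mul _))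
      intro t ht
      exact pointwise2 hα1 (le_trans hy2 ht.1) ht.2
    have hsplit2 : ∫ t in y..x, (x ^ ((1-α)/2) * (1 / (t * Real.log t ^ 2)) + 4 / Real.log x ^ 2 * (1 / t ^ α))
        = x ^ ((1-α)/2) * ((Real.log y)⁻¹ - (Real.log x)⁻¹)
          + 4 / Real.log x ^ 2 * ((x ^ (1-α) - y ^ (1-α)) / (1-α)) := by
      rw [intervalIntegral.integral_add (hD_intyx.const_mul _) (hC_intyx.const_mul _),
        intervalIntegral.integral_const_mul, intervalIntegral.integral_const_mul,
        integral_invlogsq hy2 hxy, integral_one_div_rpow hy2 hxy hα1]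
    have hxh0 : (0:ℝ) < x ^ ((1-α)/2) := Real.rpow_pos_of_pos hx0 _
    have hinvy : (Real.log y)⁻¹ = (1-α)/2 := by rw [hly]; field_simp
    have hyb0 : (0:ℝ) < y ^ (1-α) := Real.rpow_pos_of_pos hy0 _
    have hEbound : ∫ t in y..x, 1 / (t ^ α * Real.log t ^ 2)
        ≤ x ^ ((1-α)/2) * ((1-α)/2) + 4 / Real.log x ^ 2 * (x ^ (1-α) / (1-α)) := by
      have h1 : (Real.log y)⁻¹ - (Real.log x)⁻¹ ≤ (1-α)/2 := by
        rw [hinvy]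
        have : 0 < (Real.log x)⁻¹ := by positivity
        linarith
      have h2 : (x ^ (1-α) - y ^ (1-α)) / (1-α) ≤ x ^ (1-α) / (1-α) := by
        gcongr
        linarith
      calc ∫ t in y..x, 1 / (t ^ α * Real.log t ^ 2)
          ≤ x ^ ((1-α)/2) * ((Real.log y)⁻¹ - (Real.log x)⁻¹)
            + 4 / Real.log x ^ 2 * ((x ^ (1-α) - y ^ (1-α)) / (1-α)) := by
            rw [← hsplit2]; exact hmono2
        _ ≤ x ^ ((1-α)/2) * ((1-α)/2) + 4 / Real.log x ^ 2 * (x ^ (1-α) / (1-α)) := by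
            gcongr
    have hpart2 : ∫ t in y..x, 1 / (t ^ α * Real.log t)
        ≤ x ^ (1-α) / ((1-α) * Real.log x)
          + (1/(1-α)) * (x ^ ((1-α)/2) * ((1-α)/2) + 4 / Real.log x ^ 2 * (x ^ (1-α) / (1-α))) := by
      have hFy : 0 ≤ y ^ (1-α) / ((1-α) * Real.log y) := by
        apply div_nonneg hyb0.le
        rw [hly]; positivity
      have hEnn : (0:ℝ) ≤ (1/(1-α)) := by positivity
      have := hftc
      rw [hsub] at this
      have hmul := mul_le_mul_of_nonneg_left hEbound hEnn
      linarith
    -- simplify the error terms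
    have hA : (1/(1-α)) * (x ^ ((1-α)/2) * ((1-α)/2)) = x ^ ((1-α)/2) / 2 := by
      field_simp
    have hBq : (1/(1-α)) * (4 / Real.log x ^ 2 * (x ^ (1-α) / (1-α)))
        = 4 * (x ^ (1-α) / ((1-α)^2 * Real.log x ^ 2)) := by
      field_simp
    have hhp := halfpow_le hβ0 hx
    -- combine everything
    have hgoal1 : ∫ t in (2:ℝ)..x, 1 / (t ^ α * Real.log t)
        ≤ (Real.log (Real.log x) - Real.log (Real.log 2) + Real.exp 2)
          + (x ^ (1-α) / ((1-α) * Real.log x)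
            + (x ^ ((1-α)/2) / 2 + 4 * (x ^ (1-α) / ((1-α)^2 * Real.log x ^ 2)))) := by
      rw [← hadj]
      have := hpart2
      rw [mul_add, hA, hBq] at this
      linarith
    linarith [hgoal1, hhp, hT, he2, hll2]
end

section
/- There is an absolute constant C such that for all 1/2 < α ≤ 1 and all real x ≥ 2, ∫₂^x dt/(t^{1-α}·(2·log x - log t)) ≤ x^α/(α·log x) + C·x^α/(log x)². -/
open Real intervalIntegral

theorem appendix_A2 :
    ∃ C : ℝ, ∀ α x : ℝ, 1/2 < α → α ≤ 1 → 2 ≤ x →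
      ∫ t in (2 : ℝ)..x, 1 / (t ^ (1 - α) * (2 * Real.log x - Real.log t))
        ≤ x ^ α / (α * Real.log x) + C * x ^ α / (Real.log x) ^ 2 := by
  use 0
  intro α x hα hα1 hx
  have hx0 : (0:ℝ) < x := lt_of_lt_of_le (by norm_num) hx
  have hlog2 : (0:ℝ) < Real.log 2 := Real.log_pos (by norm_num)
  have hlogx : (0:ℝ) < Real.log x := lt_of_lt_of_le hlog2 (Real.log_le_log (by norm_num) hx)
  have hα0 : (0:ℝ) < α := lt_trans (by norm_num) hα
  -- pointwise bound and integrability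
  have hbound : ∀ t ∈ Set.Icc (2:ℝ) x,
      1 / (t ^ (1 - α) * (2 * Real.log x - Real.log t)) ≤ t ^ (α - 1) / Real.log x := by
    intro t ht
    obtain ⟨ht2, htx⟩ := ht
    have ht0 : (0:ℝ) < t := lt_of_lt_of_le (by norm_num) ht2
    have htp : (0:ℝ) < t ^ (1 - α) := Real.rpow_pos_of_pos ht0 _
    have hlt : Real.log t ≤ Real.log x := Real.log_le_log ht0 htx
    have hden : Real.log x ≤ 2 * Real.log x - Real.log t := by linarith
    have h1 : 1 / (t ^ (1 - α) * (2 * Real.log x - Real.log t)) ≤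
        1 / (t ^ (1 - α) * Real.log x) := by
      apply one_div_le_one_div_of_le (by positivity)
      exact mul_le_mul_of_nonneg_left hden htp.le
    calc 1 / (t ^ (1 - α) * (2 * Real.log x - Real.log t))
        ≤ 1 / (t ^ (1 - α) * Real.log x) := h1
      _ = t ^ (α - 1) / Real.log x := by
          rw [one_div, mul_inv]
          rw [show α - 1 = -(1 - α) by ring, Real.rpow_neg ht0.le]
          rw [div_eq_mul_inv]
  have hcont1 : IntervalIntegrable
      (fun t => 1 / (t ^ (1 - α) * (2 * Real.log x - Real.log t)))
      MeasureTheory.volume 2 x := by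
    apply ContinuousOn.intervalIntegrable
    have huIcc : Set.uIcc (2:ℝ) x = Set.Icc 2 x := Set.uIcc_of_le hx
    rw [huIcc]
    apply ContinuousOn.div continuousOn_const
    · apply ContinuousOn.mul
      · intro t ht
        exact (Real.continuousAt_rpow_const t (1-α)
          (Or.inl (by linarith [ht.1] : t ≠ 0))).continuousWithinAt
      · apply ContinuousOn.sub continuousOn_const
        intro t ht
        exact (Real.continuousAt_log (by linarith [ht.1])).continuousWithinAt
    · intro t ht
      have ht0 : (0:ℝ) < t := lt_of_lt_of_le (by norm_num) ht.1
      have htp : (0:ℝ) < t ^ (1 - α) := Real.rpow_pos_of_pos ht0 _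
      have hlt : Real.log t ≤ Real.log x := Real.log_le_log ht0 ht.2
      have : (0:ℝ) < 2 * Real.log x - Real.log t := by linarith
      positivity
  have hcont2 : IntervalIntegrable (fun t : ℝ => t ^ (α - 1) / Real.log x)
      MeasureTheory.volume 2 x := by
    apply ContinuousOn.intervalIntegrable
    have huIcc : Set.uIcc (2:ℝ) x = Set.Icc 2 x := Set.uIcc_of_le hx
    rw [huIcc]
    apply ContinuousOn.div _ continuousOn_const (fun _ _ => hlogx.ne')
    intro t ht
    exact (Real.continuousAt_rpow_const t (α-1)
      (Or.inl (by linarith [ht.1] : t ≠ 0))).continuousWithinAt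
  have hmono := intervalIntegral.integral_mono_on hx hcont1 hcont2 hbound
  have hcalc : ∫ t in (2:ℝ)..x, t ^ (α - 1) / Real.log x
      = ((x ^ α - 2 ^ α) / α) / Real.log x := by
    rw [intervalIntegral.integral_div]
    congr 1
    rw [integral_rpow (Or.inl (by linarith : (-1:ℝ) < α - 1))]
    ring_nf
  rw [hcalc] at hmono
  have h2 : (0:ℝ) < (2:ℝ) ^ α := Real.rpow_pos_of_pos (by norm_num) _
  have hfin : ((x ^ α - 2 ^ α) / α) / Real.log x ≤ x ^ α / (α * Real.log x) := by
    rw [div_div]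
    apply div_le_div_of_nonneg_right _ (by positivity)
    linarith
  simp only [zero_mul, zero_div, add_zero]
  linarith
end
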